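/- For any instance with n agents having binary-valued MMS-feasible valuations (v_i(S) ∈ {0,1} for all S ⊆ M, not necessarily monotone), there exists a complete allocation X = (X_1, ..., X_n) of M such that for every pair of agents i, j: v_i(X_i) ≥ μ_i(X_i ∪ X_j), where μ_i(S) = max over 2-partitions (A,B) of S of min(v_i(A), v_i(B)). -/

import Mathlib

open Finset

/-- Two-part maximin share: max over partitions (A, S \ A) of S of the min value. -/
def muN {α : Type*} [DecidableEq α] (v : Finset α → ℕ) (S : Finset α) : ℕ :=
  S.powerset.sup' ⟨∅, Finset.empty_mem_powerset S⟩ fun A => min (v A) (v (S \ A))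

namespace PMMSaux
set_option linter.unusedSectionVars false

variable {α : Type*} [DecidableEq α]

/-- A set is rich for valuation `f`: it splits into two parts both valued 1. -/
def Rich (f : Finset α → ℕ) (S : Finset α) : Prop :=
  ∃ A ⊆ S, f A = 1 ∧ f (S \ A) = 1

theorem muN_le_one {f : Finset α → ℕ} (hbin : ∀ S, f S = 0 ∨ f S = 1) (S : Finset α) :
    muN f S ≤ 1 := by
  apply Finset.sup'_le
  intro A _
  exact le_trans (min_le_left _ _) (by rcases hbin A with h | h <;> omega)

theorem muN_eq_zero {f : Finset α → ℕ} (S : Finset α) (h : ¬ Rich f S)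
    (hbin : ∀ S, f S = 0 ∨ f S = 1) : muN f S = 0 := by
  by_contra hne
  obtain ⟨A, hA, hAv⟩ : ∃ A ∈ S.powerset, 1 ≤ min (f A) (f (S \ A)) := by
    by_contra hc
    push_neg at hc
    have : muN f S ≤ 0 := Finset.sup'_le _ _ fun A hA => by
      have := hc A hA; omega
    omega
  exact h ⟨A, Finset.mem_powerset.1 hA, by rcases hbin A with h' | h' <;> omega,
    by rcases hbin (S \ A) with h' | h' <;> omega⟩

theorem muN_le_goal {f : Finset α → ℕ} (hbin : ∀ S, f S = 0 ∨ f S = 1) (S T : Finset α)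
    (h : f T = 1 ∨ ¬ Rich f S) : muN f S ≤ f T := by
  rcases h with h | h
  · rw [h]; exact muN_le_one hbin S
  · rw [muN_eq_zero S h hbin]; omega

theorem rich_empty {f : Finset α → ℕ} (h : Rich f (∅ : Finset α)) : f ∅ = 1 := by
  obtain ⟨A, hA, h1, _⟩ := h
  rw [Finset.subset_empty.1 hA] at h1; exact h1

section agent
variable {n : ℕ} {v : Fin n → Finset α → ℕ}

theorem richSplit (hbin : ∀ i S, v i S = 0 ∨ v i S = 1)
    (hmms : ∀ i, ∀ S X1 Y1 : Finset α, X1 ⊆ S → Y1 ⊆ S →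
      min (v i Y1) (v i (S \ Y1)) ≤ max (v i X1) (v i (S \ X1)))
    {i : Fin n} {S : Finset α} (h : Rich (v i) S) {B : Finset α} (hB : B ⊆ S) :
    v i B = 1 ∨ v i (S \ B) = 1 := by
  obtain ⟨A, hA, h1, h2⟩ := h
  have := hmms i S B A hB hA
  rw [h1, h2] at this
  rcases hbin i B with h' | h'
  · right
    rcases hbin i (S \ B) with h'' | h''
    · exfalso; rw [h', h''] at this; simp at this
    · exact h''
  · exact Or.inl h'

theorem richZ (hbin : ∀ i S, v i S = 0 ∨ v i S = 1)
    (hmms : ∀ i, ∀ S X1 Y1 : Finset α, X1 ⊆ S → Y1 ⊆ S →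
      min (v i Y1) (v i (S \ Y1)) ≤ max (v i X1) (v i (S \ X1)))
    {i : Fin n} {S : Finset α} (h0 : v i ∅ = 0) (h : Rich (v i) S) :
    v i S = 1 := by
  rcases richSplit hbin hmms h (Finset.empty_subset S) with h' | h'
  · rw [h0] at h'; omega
  · rwa [Finset.sdiff_empty] at h'

theorem valid_two (M : Finset α) (X : Fin n → Finset α) (i j : Fin n) (hij : i ≠ j)
    (P Q : Finset α)
    (hPQ : P ∪ Q = X i ∪ X j) (hdisj : Disjoint P Q)
    (h1 : ∀ a, X a ⊆ M) (hd : ∀ a b : Fin n, a ≠ b → Disjoint (X a) (X b))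
    (hc : Finset.univ.biUnion X = M) :
    (∀ a, (Function.update (Function.update X i P) j Q) a ⊆ M) ∧
    (∀ a b : Fin n, a ≠ b →
      Disjoint ((Function.update (Function.update X i P) j Q) a)
        ((Function.update (Function.update X i P) j Q) b)) ∧
      Finset.univ.biUnion (Function.update (Function.update X i P) j Q) = M := by
  set Y := Function.update (Function.update X i P) j Q with hY
  have hYi : Y i = P := by simp [hY, Function.update, hij]
  have hYj : Y j = Q := by simp [hY, Function.update]
  have hYo : ∀ a, a ≠ i → a ≠ j → Y a = X a := by
    intro a hai haj; simp [hY, Function.update, hai, haj]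
  have hPsub : P ⊆ X i ∪ X j := hPQ ▸ Finset.subset_union_left
  have hQsub : Q ⊆ X i ∪ X j := hPQ ▸ Finset.subset_union_right
  have hcase : ∀ a, Y a = P ∨ Y a = Q ∨ (a ≠ i ∧ a ≠ j ∧ Y a = X a) := by
    intro a
    by_cases hai : a = i
    · subst hai; exact Or.inl hYi
    by_cases haj : a = j
    · subst haj; exact Or.inr (Or.inl hYj)
    · exact Or.inr (Or.inr ⟨hai, haj, hYo a hai haj⟩)
  have hsub : ∀ a, Y a ⊆ M := by
    intro a
    rcases hcase a with h | h | ⟨_, _, h⟩ <;> rw [h]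
    · exact hPsub.trans (Finset.union_subset (h1 _) (h1 _))
    · exact hQsub.trans (Finset.union_subset (h1 _) (h1 _))
    · exact h1 a
  have hdisjXX : ∀ a, a ≠ i → a ≠ j → Disjoint (X a) (X i ∪ X j) := by
    intro a hai haj
    exact Finset.disjoint_union_right.2 ⟨hd a i hai, hd a j haj⟩
  refine ⟨hsub, ?_, ?_⟩
  · intro a b hab
    by_cases hai : a = i
    · subst hai
      by_cases hbj : b = j
      · subst hbj; rw [hYi, hYj]; exact hdisj
      · rw [hYi, hYo b (Ne.symm hab) hbj]
        exact (Finset.disjoint_of_subset_left hPsub (hdisjXX b (Ne.symm hab) hbj).symm)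
    by_cases haj : a = j
    · subst haj
      by_cases hbi : b = i
      · subst hbi; rw [hYj, hYi]; exact hdisj.symm
      · rw [hYj, hYo b hbi (Ne.symm hab)]
        exact (Finset.disjoint_of_subset_left hQsub (hdisjXX b hbi (Ne.symm hab)).symm)
    · by_cases hbi : b = i
      · subst hbi
        rw [hYo a hai haj, hYi]
        exact Finset.disjoint_of_subset_right hPsub (hdisjXX a hai haj)
      by_cases hbj : b = j
      · subst hbj
        rw [hYo a hai haj, hYj]
        exact Finset.disjoint_of_subset_right hQsub (hdisjXX a hai haj)
      · rw [hYo a hai haj, hYo b hbi hbj]; exact hd a b hab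
  · rw [← hc]
    ext x
    simp only [Finset.mem_biUnion, Finset.mem_univ, true_and]
    constructor
    · rintro ⟨a, ha⟩
      rcases hcase a with h | h | ⟨_, _, h⟩ <;> rw [h] at ha
      · rcases Finset.mem_union.1 (hPsub ha) with h' | h'
        exacts [⟨i, h'⟩, ⟨j, h'⟩]
      · rcases Finset.mem_union.1 (hQsub ha) with h' | h'
        exacts [⟨i, h'⟩, ⟨j, h'⟩]
      · exact ⟨a, ha⟩
    · rintro ⟨a, ha⟩
      by_cases hmem : x ∈ X i ∪ X j
      · rw [← hPQ] at hmem
        rcases Finset.mem_union.1 hmem with h | h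
        · exact ⟨i, by rwa [hYi]⟩
        · exact ⟨j, by rwa [hYj]⟩
      · have hai : a ≠ i := fun h => hmem (Finset.mem_union_left _ (h ▸ ha))
        have haj : a ≠ j := fun h => hmem (Finset.mem_union_right _ (h ▸ ha))
        exact ⟨a, by rwa [hYo a hai haj]⟩

theorem phi_lt_h {n hX hY gX gY VX VY Mc : ℕ}
    (hh : hX < hY) (hYn : hY ≤ n) (hg : gY ≤ Mc) (hV : VY ≤ n * n) :
    (n - hY) * ((Mc + 1) * (n * n + 1)) + gY * (n * n + 1) + VY <
    (n - hX) * ((Mc + 1) * (n * n + 1)) + gX * (n * n + 1) + VX := by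
  have key : gY * (n * n + 1) + VY < (Mc + 1) * (n * n + 1) := by
    have h1 : gY * (n * n + 1) ≤ Mc * (n * n + 1) := Nat.mul_le_mul_right _ hg
    have h2 : (Mc + 1) * (n * n + 1) = Mc * (n * n + 1) + (n * n + 1) := by ring
    omega
  calc (n - hY) * ((Mc + 1) * (n * n + 1)) + gY * (n * n + 1) + VY
      < (n - hY) * ((Mc + 1) * (n * n + 1)) + (Mc + 1) * (n * n + 1) := by omega
    _ = (n - hY + 1) * ((Mc + 1) * (n * n + 1)) := by ring
    _ ≤ (n - hX) * ((Mc + 1) * (n * n + 1)) := Nat.mul_le_mul_right _ (by omega)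
    _ ≤ _ := by
        have := Nat.le_add_right ((n - hX) * ((Mc + 1) * (n * n + 1))) (gX * (n * n + 1) + VX)
        omega

theorem phi_lt_g {n hX gX gY VX VY Mc : ℕ}
    (hg : gY < gX) (hV : VY ≤ n * n) :
    (n - hX) * ((Mc + 1) * (n * n + 1)) + gY * (n * n + 1) + VY <
    (n - hX) * ((Mc + 1) * (n * n + 1)) + gX * (n * n + 1) + VX := by
  have h1 : (gY + 1) * (n * n + 1) ≤ gX * (n * n + 1) := Nat.mul_le_mul_right _ (by omega)
  have h2 : (gY + 1) * (n * n + 1) = gY * (n * n + 1) + (n * n + 1) := by ring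
  omega

/-- A two-part all-happy allocation. -/
theorem twopart (M : Finset α) (hall : ∀ z : Fin n, v z ∅ = 1)
    (hbin : ∀ i S, v i S = 0 ∨ v i S = 1)
    (u0 u1 : Fin n) (h01 : u0 ≠ u1) (P : Finset α) (hP : P ⊆ M)
    (hv0 : v u0 P = 1) (hv1 : v u1 (M \ P) = 1) :
    ∃ X : Fin n → Finset α,
      (∀ i, X i ⊆ M) ∧ (∀ i j, i ≠ j → Disjoint (X i) (X j)) ∧
      Finset.univ.biUnion X = M ∧
      ∀ i j, i ≠ j → muN (v i) (X i ∪ X j) ≤ v i (X i) := by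
  classical
  refine ⟨fun a => if a = u0 then P else if a = u1 then M \ P else ∅, ?_, ?_, ?_, ?_⟩
  · intro a
    by_cases h : a = u0
    · simpa [h] using hP
    by_cases h' : a = u1 <;> simp [h, h', Ne.symm h01]
  · intro a b hab
    have key : ∀ c d : Fin n, c ≠ d → c = u0 → d = u1 →
        Disjoint (if c = u0 then P else if c = u1 then M \ P else ∅)
          (if d = u0 then P else if d = u1 then M \ P else ∅) := by
      intro c d hcd hc hd
      subst hc; subst hd
      simp [Ne.symm h01, h01, Finset.disjoint_sdiff]
    by_cases ha0 : a = u0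
    · by_cases hb1 : b = u1
      · exact key a b hab ha0 hb1
      · subst ha0
        simp [Ne.symm hab, hb1]
    · by_cases ha1 : a = u1
      · subst ha1
        by_cases hb0 : b = u0
        · subst hb0
          simp [h01, Ne.symm h01, Finset.sdiff_disjoint]
        · simp [Ne.symm hab, hb0, ha0]
      · simp [ha0, ha1]
  · ext x
    simp only [Finset.mem_biUnion, Finset.mem_univ, true_and]
    constructor
    · rintro ⟨a, ha⟩
      by_cases h : a = u0
      · rw [if_pos h] at ha; exact hP ha
      by_cases h' : a = u1
      · rw [if_neg h, if_pos h'] at ha; exact (Finset.sdiff_subset) ha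
      · rw [if_neg h, if_neg h'] at ha; exact absurd ha (Finset.notMem_empty x)
    · intro hx
      by_cases h : x ∈ P
      · exact ⟨u0, by simp [h]⟩
      · exact ⟨u1, by simp [Ne.symm h01, Finset.mem_sdiff, hx, h]⟩
  · intro i j hij
    apply muN_le_goal (hbin i)
    left
    by_cases h : i = u0
    · simpa [h] using hv0
    by_cases h' : i = u1
    · simpa [h, h', Ne.symm h01] using hv1
    · simpa [h, h'] using hall i

theorem single_alloc (M : Finset α) (u : Fin n) :
    (∀ a, (if a = u then M else ∅) ⊆ M) ∧
    (∀ a b : Fin n, a ≠ b →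
      Disjoint (if a = u then M else ∅) (if b = u then M else ∅)) ∧
    Finset.univ.biUnion (fun a => if a = u then M else ∅) = M := by
  refine ⟨?_, ?_, ?_⟩
  · intro a; by_cases h : a = u <;> simp [h]
  · intro a b hab
    by_cases h : a = u
    · subst h
      rw [if_neg (Ne.symm hab)]
      exact Finset.disjoint_empty_right _
    · rw [if_neg h]
      exact Finset.disjoint_empty_left _
  · ext x
    simp only [Finset.mem_biUnion, Finset.mem_univ, true_and]
    constructor
    · rintro ⟨a, ha⟩
      by_cases h : a = u
      · rwa [if_pos h] at ha
      · rw [if_neg h] at ha; exact absurd ha (Finset.notMem_empty x)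
    · intro hx; exact ⟨u, by simp [hx]⟩
end agent

section opt
open scoped Classical
set_option maxHeartbeats 1000000

variable {β : Type*} [DecidableEq β]

theorem path_edge {E : β → β → Prop} (L : List β) (hN : L.Nodup) (hC : L.Chain' E)
    (hL : L ≠ []) (a : β) (ha : a ∈ L) (hat : a ≠ L.getLast hL) :
    E a (L.formPerm a) := by
  obtain ⟨⟨r, hr⟩, rfl⟩ := List.mem_iff_get.1 ha
  have hrlast : r < L.length - 1 := by
    rcases Nat.lt_or_ge r (L.length - 1) with h | h
    · exact h
    · exfalso
      apply hat
      have : r = L.length - 1 := by omega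
      rw [List.getLast_eq_getElem]
      simp [this]
  have hform : L.formPerm (L.get ⟨r, hr⟩) = L.get ⟨(r + 1) % L.length, by
      exact Nat.mod_lt _ (by omega)⟩ := List.formPerm_apply_getElem L hN r hr
  have hmod : (r + 1) % L.length = r + 1 := Nat.mod_eq_of_lt (by omega)
  rw [hform]
  have := List.isChain_iff_getElem.1 hC r (by omega)
  convert this using 2
  all_goals simp [hmod]

theorem path_last (L : List β) (hN : L.Nodup) (x : β) (xs : List β) (hx : L = x :: xs) :
    L.formPerm (L.getLast (by simp [hx])) = x := by
  subst hx
  exact List.formPerm_apply_getLast x xs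

variable {n : ℕ}

def ValidP (v : Fin n → Finset α → ℕ) (M : Finset α) (X : Fin n → Finset α) : Prop :=
  (∀ a, X a ⊆ M) ∧ (∀ a b : Fin n, a ≠ b → Disjoint (X a) (X b)) ∧
    Finset.univ.biUnion X = M ∧ (∀ a, v a ∅ = 1 → X a = ∅)

noncomputable def hval (v : Fin n → Finset α → ℕ) (X : Fin n → Finset α) : ℕ :=
  (Finset.univ.filter fun a => v a (X a) = 1).card

noncomputable def gval (v : Fin n → Finset α → ℕ) (X : Fin n → Finset α) : ℕ :=
  ∑ a ∈ Finset.univ.filter (fun a => ¬ v a (X a) = 1), (X a).card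

noncomputable def Vval (v : Fin n → Finset α → ℕ) (X : Fin n → Finset α) : ℕ :=
  ((Finset.univ ×ˢ Finset.univ).filter fun p : Fin n × Fin n =>
    p.1 ≠ p.2 ∧ ¬ v p.1 (X p.1) = 1 ∧ Rich (v p.1) (X p.1 ∪ X p.2)).card

noncomputable def Phi (v : Fin n → Finset α → ℕ) (M : Finset α) (X : Fin n → Finset α) : ℕ :=
  (n - hval v X) * ((M.card + 1) * (n * n + 1)) + gval v X * (n * n + 1) + Vval v X

theorem hval_le (v : Fin n → Finset α → ℕ) (X : Fin n → Finset α) : hval v X ≤ n := by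
  calc hval v X ≤ (Finset.univ : Finset (Fin n)).card := Finset.card_filter_le _ _
  _ = n := by simp

theorem Vval_le (v : Fin n → Finset α → ℕ) (X : Fin n → Finset α) : Vval v X ≤ n * n := by
  calc Vval v X ≤ ((Finset.univ ×ˢ Finset.univ : Finset (Fin n × Fin n))).card :=
        Finset.card_filter_le _ _
  _ = n * n := by simp

theorem gval_le (v : Fin n → Finset α → ℕ) (M : Finset α) (X : Fin n → Finset α)
    (hX : ValidP v M X) : gval v X ≤ M.card := by
  calc gval v X ≤ ∑ a ∈ Finset.univ, (X a).card :=
        Finset.sum_le_sum_of_subset (Finset.filter_subset _ _)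
    _ = (Finset.univ.biUnion X).card :=
        (Finset.card_biUnion (fun x _ y _ hxy => hX.2.1 x y hxy)).symm
    _ = M.card := by rw [hX.2.2.1]

theorem valid_perm (v : Fin n → Finset α → ℕ) (M : Finset α) (X : Fin n → Finset α)
    (σ : Equiv.Perm (Fin n)) (hX : ValidP v M X) (hfix : ∀ a, v a ∅ = 1 → σ a = a) :
    ValidP v M (fun a => X (σ a)) := by
  obtain ⟨h1, hd, hc, h4⟩ := hX
  refine ⟨fun a => h1 _, fun a b hab => hd _ _ (fun h => hab (σ.injective h)), ?_, ?_⟩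
  · rw [← hc]
    ext x
    simp only [Finset.mem_biUnion, Finset.mem_univ, true_and]
    constructor
    · rintro ⟨a, ha⟩; exact ⟨σ a, ha⟩
    · rintro ⟨a, ha⟩; exact ⟨σ.symm a, by simpa using ha⟩
  · intro a ha
    show X (σ a) = ∅
    rw [hfix a ha]
    exact h4 a ha
/-- Move A: give `i` everything of the pair, `j` nothing.  Case A1: `j` unhappy. -/
theorem moveA1 (v : Fin n → Finset α → ℕ) (M : Finset α) (X : Fin n → Finset α)
    (hX : ValidP v M X) (i j : Fin n) (hij : i ≠ j)
    (hvi1 : ¬ v i (X i) = 1) (hvi0 : v i ∅ = 0) (hS : v i (X i ∪ X j) = 1)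
    (hj : ¬ v j (X j) = 1) :
    ∃ Y, ValidP v M Y ∧ Phi v M Y < Phi v M X := by
  set Y := Function.update (Function.update X i (X i ∪ X j)) j ∅ with hYdef
  have hYi : Y i = X i ∪ X j := by simp [hYdef, Function.update, hij]
  have hYj : Y j = ∅ := by simp [hYdef, Function.update]
  have hYo : ∀ a, a ≠ i → a ≠ j → Y a = X a := by
    intro a hai haj; simp [hYdef, Function.update, hai, haj]
  have hval3 := valid_two M X i j hij (X i ∪ X j) ∅ (by simp) (Finset.disjoint_empty_right _)
    hX.1 hX.2.1 hX.2.2.1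
  have hYvalid : ValidP v M Y := by
    refine ⟨hval3.1, hval3.2.1, hval3.2.2, ?_⟩
    intro a ha
    by_cases hai : a = i
    · subst hai; rw [hvi0] at ha; omega
    by_cases haj : a = j
    · subst haj; exact hYj
    · rw [hYo a hai haj]; exact hX.2.2.2 a ha
  refine ⟨Y, hYvalid, ?_⟩
  have hhlt : hval v X < hval v Y := by
    apply Finset.card_lt_card
    constructor
    · intro a ha
      simp only [Finset.mem_filter, Finset.mem_univ, true_and] at ha ⊢
      have hai : a ≠ i := fun h => hvi1 (h ▸ ha)
      have haj : a ≠ j := fun h => hj (h ▸ ha)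
      rwa [hYo a hai haj]
    · intro hsub
      have : i ∈ Finset.univ.filter (fun a => v a (Y a) = 1) := by
        simp only [Finset.mem_filter, Finset.mem_univ, true_and]
        rw [hYi]; exact hS
      have := hsub this
      simp only [Finset.mem_filter, Finset.mem_univ, true_and] at this
      exact hvi1 this
  show Phi v M Y < Phi v M X
  unfold Phi
  exact phi_lt_h hhlt (hval_le v Y) (gval_le v M Y hYvalid) (Vval_le v Y)

/-- Move A2 : `j` happy, `X i` nonempty: give `i` everything, `j` nothing. -/
theorem moveA2 (v : Fin n → Finset α → ℕ) (M : Finset α) (X : Fin n → Finset α)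
    (hX : ValidP v M X) (i j : Fin n) (hij : i ≠ j)
    (hvi1 : ¬ v i (X i) = 1) (hvi0 : v i ∅ = 0) (hS : v i (X i ∪ X j) = 1)
    (hj : v j (X j) = 1) (hvj : ¬ v j ∅ = 1) (hXi : X i ≠ ∅) :
    ∃ Y, ValidP v M Y ∧ Phi v M Y < Phi v M X := by
  set Y := Function.update (Function.update X i (X i ∪ X j)) j ∅ with hYdef
  have hYi : Y i = X i ∪ X j := by simp [hYdef, Function.update, hij]
  have hYj : Y j = ∅ := by simp [hYdef, Function.update]
  have hYo : ∀ a, a ≠ i → a ≠ j → Y a = X a := by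
    intro a hai haj; simp [hYdef, Function.update, hai, haj]
  have hval3 := valid_two M X i j hij (X i ∪ X j) ∅ (by simp) (Finset.disjoint_empty_right _)
    hX.1 hX.2.1 hX.2.2.1
  have hYvalid : ValidP v M Y := by
    refine ⟨hval3.1, hval3.2.1, hval3.2.2, ?_⟩
    intro a ha
    by_cases hai : a = i
    · subst hai; rw [hvi0] at ha; omega
    by_cases haj : a = j
    · subst haj; exact hYj
    · rw [hYo a hai haj]; exact hX.2.2.2 a ha
  refine ⟨Y, hYvalid, ?_⟩
  have hiF : i ∉ Finset.univ.filter (fun a => v a (X a) = 1) := by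
    simp only [Finset.mem_filter, Finset.mem_univ, true_and]; exact hvi1
  have hjF : j ∈ Finset.univ.filter (fun a => v a (X a) = 1) := by
    simp only [Finset.mem_filter, Finset.mem_univ, true_and]; exact hj
  have hFY : Finset.univ.filter (fun a => v a (Y a) = 1)
      = insert i ((Finset.univ.filter (fun a => v a (X a) = 1)).erase j) := by
    ext a
    simp only [Finset.mem_filter, Finset.mem_univ, true_and, Finset.mem_insert,
      Finset.mem_erase]
    by_cases hai : a = i
    · subst hai; rw [hYi]; simp [hS]
    by_cases haj : a = j
    · subst haj; rw [hYj]
      simp [hvj, Ne.symm hij]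
    · rw [hYo a hai haj]
      simp [hai, haj]
  have hheq : hval v Y = hval v X := by
    unfold hval
    rw [hFY, Finset.card_insert_of_notMem
      (fun h => hiF (Finset.mem_of_mem_erase h)), Finset.card_erase_of_mem hjF]
    have : 0 < (Finset.univ.filter (fun a => v a (X a) = 1)).card :=
      Finset.card_pos.2 ⟨j, hjF⟩
    omega
  have hiU : i ∈ Finset.univ.filter (fun a => ¬ v a (X a) = 1) := by
    simp only [Finset.mem_filter, Finset.mem_univ, true_and]; exact hvi1
  have hjU : j ∉ Finset.univ.filter (fun a => ¬ v a (X a) = 1) := by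
    simp only [Finset.mem_filter, Finset.mem_univ, true_and, not_not]; exact hj
  have hUY : Finset.univ.filter (fun a => ¬ v a (Y a) = 1)
      = insert j ((Finset.univ.filter (fun a => ¬ v a (X a) = 1)).erase i) := by
    ext a
    simp only [Finset.mem_filter, Finset.mem_univ, true_and, Finset.mem_insert,
      Finset.mem_erase]
    by_cases hai : a = i
    · subst hai; rw [hYi]; simp [hS, hij]
    by_cases haj : a = j
    · subst haj; rw [hYj]; simp [hvj]
    · rw [hYo a hai haj]; simp [hai, haj]
  have hglt : gval v Y < gval v X := by
    unfold gval
    rw [hUY, Finset.sum_insert (fun h => hjU (Finset.mem_of_mem_erase h))]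
    rw [hYj]
    simp only [Finset.card_empty, zero_add]
    have hsum_eq : ∑ a ∈ (Finset.univ.filter (fun a => ¬ v a (X a) = 1)).erase i, (Y a).card
        = ∑ a ∈ (Finset.univ.filter (fun a => ¬ v a (X a) = 1)).erase i, (X a).card := by
      apply Finset.sum_congr rfl
      intro a ha
      have hai : a ≠ i := (Finset.mem_erase.1 ha).1
      have haj : a ≠ j := fun h => hjU (h ▸ Finset.mem_of_mem_erase ha)
      rw [hYo a hai haj]
    rw [hsum_eq]
    have hadd : (X i).card + ∑ a ∈ (Finset.univ.filter (fun a => ¬ v a (X a) = 1)).erase i,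
        (X a).card = ∑ a ∈ Finset.univ.filter (fun a => ¬ v a (X a) = 1), (X a).card :=
      Finset.add_sum_erase _ (fun a => (X a).card) hiU
    have hpos : 0 < (X i).card := Finset.card_pos.2 (Finset.nonempty_iff_ne_empty.2 hXi)
    omega
  show Phi v M Y < Phi v M X
  unfold Phi
  rw [hheq]
  exact phi_lt_g hglt (Vval_le v Y)

/-- A permutation move that makes `i` happy while keeping all happy agents happy. -/
theorem moveGain (v : Fin n → Finset α → ℕ) (M : Finset α) (X : Fin n → Finset α)
    (hX : ValidP v M X) (σ : Equiv.Perm (Fin n)) (hfix : ∀ a, v a ∅ = 1 → σ a = a)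
    (i : Fin n) (hvi1 : ¬ v i (X i) = 1) (hYi : v i (X (σ i)) = 1)
    (hkeep : ∀ a, v a (X a) = 1 → v a (X (σ a)) = 1) :
    ∃ Y, ValidP v M Y ∧ Phi v M Y < Phi v M X := by
  refine ⟨fun a => X (σ a), valid_perm v M X σ hX hfix, ?_⟩
  have hhlt : hval v X < hval v (fun a => X (σ a)) := by
    apply Finset.card_lt_card
    constructor
    · intro a ha
      simp only [Finset.mem_filter, Finset.mem_univ, true_and] at ha ⊢
      exact hkeep a ha
    · intro hsub
      have hmem : i ∈ Finset.univ.filter (fun a => v a (X (σ a)) = 1) := by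
        simp only [Finset.mem_filter, Finset.mem_univ, true_and]; exact hYi
      have := hsub hmem
      simp only [Finset.mem_filter, Finset.mem_univ, true_and] at this
      exact hvi1 this
  show Phi v M (fun a => X (σ a)) < Phi v M X
  unfold Phi
  exact phi_lt_h hhlt (hval_le v _) (gval_le v M _ (valid_perm v M X σ hX hfix))
    (Vval_le v _)

/-- A permutation move followed by splitting a bundle between two agents,
making `i` happy while keeping all happy agents happy. -/
theorem moveGain2 (v : Fin n → Finset α → ℕ) (M : Finset α) (X : Fin n → Finset α)
    (hX : ValidP v M X) (σ : Equiv.Perm (Fin n)) (hfix : ∀ a, v a ∅ = 1 → σ a = a)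
    (u₁ t : Fin n) (hu₁t : u₁ ≠ t) (hu₁0 : ¬ v u₁ ∅ = 1) (ht0 : ¬ v t ∅ = 1)
    (C D : Finset α) (hCD : C ∪ D = X (σ u₁) ∪ X (σ t)) (hdisj : Disjoint C D)
    (i : Fin n) (hvi1 : ¬ v i (X i) = 1)
    (hYi : v i ((Function.update (Function.update (fun a => X (σ a)) u₁ C) t D) i) = 1)
    (hkeep : ∀ a, v a (X a) = 1 →
      v a ((Function.update (Function.update (fun a => X (σ a)) u₁ C) t D) a) = 1) :
    ∃ Y, ValidP v M Y ∧ Phi v M Y < Phi v M X := by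
  have hW : ValidP v M (fun a => X (σ a)) := valid_perm v M X σ hX hfix
  set Y := Function.update (Function.update (fun a => X (σ a)) u₁ C) t D with hYdef
  have h3 := valid_two M (fun a => X (σ a)) u₁ t hu₁t C D hCD hdisj hW.1 hW.2.1 hW.2.2.1
  have hYo : ∀ a, a ≠ u₁ → a ≠ t → Y a = X (σ a) := by
    intro a h1 h2; simp [hYdef, Function.update, h1, h2]
  have hYvalid : ValidP v M Y := by
    refine ⟨h3.1, h3.2.1, h3.2.2, ?_⟩
    intro a ha
    by_cases h1 : a = u₁
    · subst h1; exact absurd ha hu₁0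
    by_cases h2 : a = t
    · subst h2; exact absurd ha ht0
    · rw [hYo a h1 h2, hfix a ha]
      exact hX.2.2.2 a ha
  refine ⟨Y, hYvalid, ?_⟩
  have hhlt : hval v X < hval v Y := by
    apply Finset.card_lt_card
    constructor
    · intro a ha
      simp only [Finset.mem_filter, Finset.mem_univ, true_and] at ha ⊢
      exact hkeep a ha
    · intro hsub
      have hmem : i ∈ Finset.univ.filter (fun a => v a (Y a) = 1) := by
        simp only [Finset.mem_filter, Finset.mem_univ, true_and]; exact hYi
      have := hsub hmem
      simp only [Finset.mem_filter, Finset.mem_univ, true_and] at this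
      exact hvi1 this
  show Phi v M Y < Phi v M X
  unfold Phi
  exact phi_lt_h hhlt (hval_le v _) (gval_le v M _ hYvalid) (Vval_le v _)

/-- The sink move: rotate bundles along the path; the sink gets the empty set. -/
theorem moveSink (v : Fin n → Finset α → ℕ) (M : Finset α) (X : Fin n → Finset α)
    (hbin : ∀ i S, v i S = 0 ∨ v i S = 1)
    (hmms : ∀ i, ∀ S X1 Y1 : Finset α, X1 ⊆ S → Y1 ⊆ S →
      min (v i Y1) (v i (S \ Y1)) ≤ max (v i X1) (v i (S \ X1)))
    (hX : ValidP v M X) (i j₁ t : Fin n) (l₂ : List (Fin n))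
    (hinotl : i ∉ j₁ :: l₂)
    (hmemb : ∀ a ∈ j₁ :: l₂, v a (X a) = 1 ∧ v a ∅ = 0)
    (hvi1 : ¬ v i (X i) = 1) (hvi0 : v i ∅ = 0) (hXi : X i = ∅)
    (hij₁ : i ≠ j₁) (hchainhead : Rich (v i) (X j₁))
    (htmem : t ∈ j₁ :: l₂)
    (hσt : (i :: j₁ :: l₂).formPerm t = i)
    (hedges : ∀ a ∈ i :: j₁ :: l₂, a ≠ t →
      Rich (v a) (X ((i :: j₁ :: l₂).formPerm a)))
    (hsink : ∀ b, ¬ Rich (v t) (X b)) :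
    ∃ Y, ValidP v M Y ∧ Phi v M Y < Phi v M X := by
  set σ : Equiv.Perm (Fin n) := (i :: j₁ :: l₂).formPerm with hσdef
  set Y : Fin n → Finset α := fun a => X (σ a) with hYdef
  have hiL : i ∈ i :: j₁ :: l₂ := List.mem_cons_self
  have htL : t ∈ i :: j₁ :: l₂ := List.mem_cons_of_mem _ htmem
  have hti : t ≠ i := fun h => hinotl (h ▸ htmem)
  have hmem' : ∀ a ∈ i :: j₁ :: l₂, a ≠ i → a ∈ j₁ :: l₂ := by
    intro a ha hai
    rcases List.mem_cons.1 ha with h | h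
    · exact absurd h hai
    · exact h
  have hLv0 : ∀ a ∈ i :: j₁ :: l₂, v a ∅ = 0 := by
    intro a ha
    rcases List.mem_cons.1 ha with rfl | ha'
    · exact hvi0
    · exact (hmemb a ha').2
  have hfix : ∀ a, v a ∅ = 1 → σ a = a := by
    intro a ha
    have haL : a ∉ i :: j₁ :: l₂ := fun h => by rw [hLv0 a h] at ha; omega
    exact List.formPerm_apply_of_notMem haL
  have hσout : ∀ a, a ∉ i :: j₁ :: l₂ → σ a = a :=
    fun a ha => List.formPerm_apply_of_notMem ha
  have hσmem : ∀ a, a ∈ i :: j₁ :: l₂ → σ a ∈ i :: j₁ :: l₂ :=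
    fun a ha => List.formPerm_apply_mem_of_mem ha
  have hYa : ∀ a, Y a = X (σ a) := fun a => rfl
  have hYhappy : ∀ a ∈ i :: j₁ :: l₂, a ≠ t → v a (Y a) = 1 := by
    intro a ha hat
    exact richZ hbin hmms (hLv0 a ha) (hedges a ha hat)
  have hYvalid : ValidP v M Y := valid_perm v M X σ hX hfix
  refine ⟨Y, hYvalid, ?_⟩
  have hYt : Y t = ∅ := by rw [hYa, hσt, hXi]
  have hYout : ∀ a, a ∉ i :: j₁ :: l₂ → Y a = X a := by
    intro a ha; rw [hYa, hσout a ha]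
  have hth : v t (X t) = 1 := (hmemb t htmem).1
  have htv0 : v t ∅ = 0 := (hmemb t htmem).2
  have hiF : i ∉ Finset.univ.filter (fun a => v a (X a) = 1) := by
    simp only [Finset.mem_filter, Finset.mem_univ, true_and]; exact hvi1
  have htF : t ∈ Finset.univ.filter (fun a => v a (X a) = 1) := by
    simp only [Finset.mem_filter, Finset.mem_univ, true_and]; exact hth
  have hFY : Finset.univ.filter (fun a => v a (Y a) = 1)
      = insert i ((Finset.univ.filter (fun a => v a (X a) = 1)).erase t) := by
    ext a
    simp only [Finset.mem_filter, Finset.mem_univ, true_and, Finset.mem_insert,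
      Finset.mem_erase]
    by_cases hai : a = i
    · subst hai
      simp only [true_or, iff_true]
      exact hYhappy a hiL (Ne.symm hti)
    by_cases hat : a = t
    · subst hat
      have h0 : v a (Y a) = 0 := by rw [hYt]; exact htv0
      simp [h0, hai]
    · constructor
      · intro h
        refine Or.inr ⟨hat, ?_⟩
        by_cases haL : a ∈ i :: j₁ :: l₂
        · exact (hmemb a (hmem' a haL hai)).1
        · rwa [hYout a haL] at h
      · rintro (rfl | ⟨-, h⟩)
        · exact absurd rfl hai
        · by_cases haL : a ∈ i :: j₁ :: l₂
          · exact hYhappy a haL hat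
          · rwa [hYout a haL]
  have hheq : hval v Y = hval v X := by
    unfold hval
    rw [hFY, Finset.card_insert_of_notMem (fun h => hiF (Finset.mem_of_mem_erase h)),
      Finset.card_erase_of_mem htF]
    have : 0 < (Finset.univ.filter (fun a => v a (X a) = 1)).card :=
      Finset.card_pos.2 ⟨t, htF⟩
    omega
  have hUY : Finset.univ.filter (fun a => ¬ v a (Y a) = 1)
      = insert t ((Finset.univ.filter (fun a => ¬ v a (X a) = 1)).erase i) := by
    ext a
    simp only [Finset.mem_filter, Finset.mem_univ, true_and, Finset.mem_insert,
      Finset.mem_erase]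
    by_cases hat : a = t
    · subst hat
      have h0 : v a (Y a) = 0 := by rw [hYt]; exact htv0
      simp [h0]
    by_cases hai : a = i
    · subst hai
      have h1 := hYhappy a hiL (Ne.symm hti)
      simp [h1, hat]
    · have hmain : v a (Y a) = 1 ↔ v a (X a) = 1 := by
        by_cases haL : a ∈ i :: j₁ :: l₂
        · have h1 := hYhappy a haL hat
          have h2 := (hmemb a (hmem' a haL hai)).1
          rw [h1, h2]
        · rw [hYout a haL]
      have hmain' := not_congr hmain
      simp [hmain', hat, hai]
  have hiU : i ∈ Finset.univ.filter (fun a => ¬ v a (X a) = 1) := by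
    simp only [Finset.mem_filter, Finset.mem_univ, true_and]; exact hvi1
  have htU : t ∉ (Finset.univ.filter (fun a => ¬ v a (X a) = 1)).erase i := by
    intro h
    have h' := Finset.mem_of_mem_erase h
    simp only [Finset.mem_filter, Finset.mem_univ, true_and] at h'
    exact h' hth
  have hgeq : gval v Y = gval v X := by
    unfold gval
    rw [hUY, Finset.sum_insert htU, hYt]
    simp only [Finset.card_empty, zero_add]
    have hs1 : ∑ a ∈ (Finset.univ.filter (fun a => ¬ v a (X a) = 1)).erase i, (Y a).card
        = ∑ a ∈ (Finset.univ.filter (fun a => ¬ v a (X a) = 1)).erase i, (X a).card := by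
      apply Finset.sum_congr rfl
      intro a ha
      have hai : a ≠ i := (Finset.mem_erase.1 ha).1
      have haU := Finset.mem_of_mem_erase ha
      simp only [Finset.mem_filter, Finset.mem_univ, true_and] at haU
      have haL : a ∉ i :: j₁ :: l₂ := by
        intro h
        exact haU (hmemb a (hmem' a h hai)).1
      rw [hYout a haL]
    rw [hs1]
    have hadd : (X i).card + ∑ a ∈ (Finset.univ.filter (fun a => ¬ v a (X a) = 1)).erase i,
        (X a).card = ∑ a ∈ Finset.univ.filter (fun a => ¬ v a (X a) = 1), (X a).card :=
      Finset.add_sum_erase _ (fun a => (X a).card) hiU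
    rw [hXi] at hadd
    simp only [Finset.card_empty, zero_add] at hadd
    rw [hadd]
  have hw : (i, j₁) ∈ (Finset.univ ×ˢ Finset.univ).filter (fun p : Fin n × Fin n =>
      p.1 ≠ p.2 ∧ ¬ v p.1 (X p.1) = 1 ∧ Rich (v p.1) (X p.1 ∪ X p.2)) := by
    simp only [Finset.mem_filter, Finset.mem_product, Finset.mem_univ, true_and]
    refine ⟨hij₁, hvi1, ?_⟩
    rw [hXi, Finset.empty_union]
    exact hchainhead
  have hVlt : Vval v Y < Vval v X := by
    unfold Vval
    have hcard : ((Finset.univ ×ˢ Finset.univ).filter (fun p : Fin n × Fin n =>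
        p.1 ≠ p.2 ∧ ¬ v p.1 (Y p.1) = 1 ∧ Rich (v p.1) (Y p.1 ∪ Y p.2))).card
        ≤ (((Finset.univ ×ˢ Finset.univ).filter (fun p : Fin n × Fin n =>
        p.1 ≠ p.2 ∧ ¬ v p.1 (X p.1) = 1 ∧ Rich (v p.1) (X p.1 ∪ X p.2))).erase (i, j₁)).card := by
      apply Finset.card_le_card_of_injOn (fun p => (p.1, σ p.2))
      · intro p hp
        simp only [Finset.mem_coe, Finset.mem_filter, Finset.mem_product, Finset.mem_univ, true_and] at hp
        obtain ⟨hp1, hp2, hp3⟩ := hp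
        rw [hYa, hYa] at hp3
        rw [hYa] at hp2
        have hkt : p.1 ≠ t := by
          intro h
          apply hsink (σ p.2)
          rw [h, hσt, hXi, Finset.empty_union] at hp3
          exact hp3
        have hkL : p.1 ∉ i :: j₁ :: l₂ := by
          intro h
          apply hp2
          have := hYhappy p.1 h hkt
          rwa [hYa] at this
        have hσk : σ p.1 = p.1 := hσout _ hkL
        rw [Finset.mem_coe, Finset.mem_erase]
        constructor
        · intro h
          have h1 : p.1 = i := congrArg Prod.fst h
          exact hkL (h1 ▸ hiL)
        simp only [Finset.mem_filter, Finset.mem_product, Finset.mem_univ, true_and]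
        refine ⟨?_, ?_, ?_⟩
        · by_cases h2L : p.2 ∈ i :: j₁ :: l₂
          · intro h; exact hkL (h ▸ hσmem p.2 h2L)
          · rw [hσout p.2 h2L]; exact hp1
        · rwa [hσk] at hp2
        · rwa [hσk] at hp3
      · intro p hp q hq hpq
        have hpq' : (p.1, σ p.2) = (q.1, σ q.2) := hpq
        injection hpq' with h1 h2
        exact Prod.ext h1 (σ.injective h2)
    rw [Finset.card_erase_of_mem hw] at hcard
    have hpos : 0 < ((Finset.univ ×ˢ Finset.univ).filter (fun p : Fin n × Fin n =>
        p.1 ≠ p.2 ∧ ¬ v p.1 (X p.1) = 1 ∧ Rich (v p.1) (X p.1 ∪ X p.2))).card :=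
      Finset.card_pos.2 ⟨_, hw⟩
    omega
  show Phi v M Y < Phi v M X
  unfold Phi
  rw [hheq, hgeq]
  omega

theorem grow (v : Fin n → Finset α → ℕ) (M : Finset α) (X : Fin n → Finset α)
    (hbin : ∀ i S, v i S = 0 ∨ v i S = 1)
    (hmms : ∀ i, ∀ S X1 Y1 : Finset α, X1 ⊆ S → Y1 ⊆ S →
      min (v i Y1) (v i (S \ Y1)) ≤ max (v i X1) (v i (S \ X1)))
    (hX : ValidP v M X)
    (hcontra : ∀ Y, ValidP v M Y → ¬ Phi v M Y < Phi v M X)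
    (i : Fin n) (hvi1 : ¬ v i (X i) = 1) (hvi0 : v i ∅ = 0) (hXi : X i = ∅)
    (l : List (Fin n)) (hlne : l ≠ [])
    (hN : (i :: l).Nodup) (hC : (i :: l).Chain' (fun a b => Rich (v a) (X b)))
    (hmemb : ∀ a ∈ l, v a (X a) = 1 ∧ v a ∅ = 0) :
    ∃ b, b ∉ i :: l ∧ (v b (X b) = 1 ∧ v b ∅ = 0) ∧
      Rich (v ((i :: l).getLast (List.cons_ne_nil _ _))) (X b) := by
  obtain ⟨j₁, l₂, rfl⟩ : ∃ j₁ l₂, l = j₁ :: l₂ := by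
    cases l with
    | nil => exact absurd rfl hlne
    | cons a as => exact ⟨a, as, rfl⟩
  set L : List (Fin n) := i :: j₁ :: l₂ with hLdef
  have hLne : L ≠ [] := List.cons_ne_nil _ _
  have hinotl : i ∉ j₁ :: l₂ := (List.nodup_cons.1 hN).1
  set t : Fin n := L.getLast hLne with htdef
  have htl_eq : L.getLast hLne = (j₁ :: l₂).getLast (List.cons_ne_nil _ _) :=
    List.getLast_cons _
  have htmem : t ∈ j₁ :: l₂ := by rw [htdef, htl_eq]; exact List.getLast_mem _
  have htL : t ∈ L := List.mem_cons_of_mem _ htmem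
  have hti : t ≠ i := fun h => hinotl (h ▸ htmem)
  have ht_happy : v t (X t) = 1 := (hmemb t htmem).1
  have ht0 : v t ∅ = 0 := (hmemb t htmem).2
  have hLv0 : ∀ a ∈ L, v a ∅ = 0 := by
    intro a ha
    rcases List.mem_cons.1 ha with rfl | ha'
    · exact hvi0
    · exact (hmemb a ha').2
  have hσt : L.formPerm t = i := path_last L hN i (j₁ :: l₂) rfl
  have hedges : ∀ a ∈ L, a ≠ t → Rich (v a) (X (L.formPerm a)) := by
    intro a ha hat
    exact path_edge L hN hC hLne a ha hat
  have hσout : ∀ a, a ∉ L → L.formPerm a = a :=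
    fun a ha => List.formPerm_apply_of_notMem ha
  have hfix : ∀ a, v a ∅ = 1 → L.formPerm a = a := by
    intro a ha
    refine hσout a (fun h => ?_)
    rw [hLv0 a h] at ha; omega
  have hij₁ : i ≠ j₁ := fun h => hinotl (h ▸ List.mem_cons_self)
  have hchainhead : Rich (v i) (X j₁) := (List.isChain_cons_cons.1 hC).1
  by_cases hsinkQ : ∃ b, Rich (v t) (X b)
  · obtain ⟨b, hb⟩ := hsinkQ
    by_cases hbL : b ∈ L
    · -- split move: contradiction
      exfalso
      obtain ⟨⟨s, hs⟩, hbget⟩ := List.mem_iff_get.1 hbL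
      have hs0 : s ≠ 0 := by
        intro h
        subst h
        have : b = i := by rw [← hbget]; rfl
        subst this
        rw [hXi] at hb
        have := rich_empty hb
        omega
      have hs1 : 1 ≤ s := Nat.one_le_iff_ne_zero.2 hs0
      have hsm1 : s - 1 < L.length := by omega
      set u₁ : Fin n := L.get ⟨s - 1, hsm1⟩ with hu₁def
      have hu₁mem : u₁ ∈ L := List.get_mem _ _
      have hσu₁ : L.formPerm u₁ = b := by
        rw [hu₁def, List.get_eq_getElem, List.formPerm_apply_getElem L hN (s - 1) hsm1, ← hbget,
          List.get_eq_getElem]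
        have : s - 1 + 1 = s := by omega
        simp only [this, Nat.mod_eq_of_lt hs]
      have hEu₁ : Rich (v u₁) (X b) := by
        have hidx : s - 1 < L.length - 1 := by omega
        have : Rich (v (L.get ⟨s - 1, hsm1⟩)) (X (L.get ⟨s - 1 + 1, by omega⟩)) :=
          List.isChain_iff_getElem.1 hC (s - 1) (by omega)
        rw [← hu₁def] at this
        have heq : L.get ⟨s - 1 + 1, by omega⟩ = b := by
          rw [← hbget]
          congr 1
          simp only [Fin.mk.injEq]
          omega
        rwa [heq] at this
      have hLlen : 2 ≤ L.length := by rw [hLdef]; simp only [List.length_cons]; omega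
      have hu₁t : u₁ ≠ t := by
        intro h
        have htget : t = L.get ⟨L.length - 1, by omega⟩ := by
          simp [htdef, List.getLast_eq_getElem]
        rw [hu₁def, htget] at h
        have := (List.Nodup.get_inj_iff hN).1 h
        simp only [Fin.mk.injEq] at this
        omega
      have hu₁0 : ¬ v u₁ ∅ = 1 := by rw [hLv0 u₁ hu₁mem]; omega
      have ht0' : ¬ v t ∅ = 1 := by rw [ht0]; omega
      obtain ⟨A₀, hA₀, hA1, hA2⟩ := hEu₁
      have hsplit := richSplit hbin hmms hb hA₀
      -- choose C D
      obtain ⟨C, D, huC, htD, hCD, hdisj⟩ :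
          ∃ C D, v u₁ C = 1 ∧ v t D = 1 ∧ C ∪ D = X b ∧ Disjoint C D := by
        rcases hsplit with hcase | hcase
        · exact ⟨X b \ A₀, A₀, hA2, hcase, Finset.sdiff_union_of_subset hA₀,
            Finset.sdiff_disjoint⟩
        · exact ⟨A₀, X b \ A₀, hA1, hcase, Finset.union_sdiff_of_subset hA₀,
            Finset.disjoint_sdiff⟩
      have hCD' : C ∪ D = X (L.formPerm u₁) ∪ X (L.formPerm t) := by
        rw [hσu₁, hσt, hXi, Finset.union_empty, hCD]
      set Y := Function.update (Function.update (fun a => X (L.formPerm a)) u₁ C) t D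
        with hYdef
      have hYo : ∀ a, a ≠ u₁ → a ≠ t → Y a = X (L.formPerm a) := by
        intro a h1 h2; simp [hYdef, Function.update, h1, h2]
      have hYu₁ : u₁ ≠ t → Y u₁ = C := by
        intro h; simp [hYdef, Function.update, h]
      have hYt : Y t = D := by simp [hYdef, Function.update]
      have hhappyY : ∀ a ∈ L, v a (Y a) = 1 := by
        intro a ha
        by_cases hat : a = t
        · subst hat; rw [hYt]; exact htD
        by_cases hau : a = u₁
        · subst hau; rw [hYu₁ hu₁t]; exact huC
        · rw [hYo a hau hat]
          exact richZ hbin hmms (hLv0 a ha) (hedges a ha hat)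
      have hYi : v i (Y i) = 1 := hhappyY i (List.mem_cons_self)
      have hkeep : ∀ a, v a (X a) = 1 → v a (Y a) = 1 := by
        intro a ha
        by_cases haL : a ∈ L
        · exact hhappyY a haL
        · have hat : a ≠ t := fun h => haL (h ▸ htL)
          have hau : a ≠ u₁ := fun h => haL (h ▸ hu₁mem)
          rw [hYo a hau hat, hσout a haL]
          exact ha
      obtain ⟨Y', hY'v, hY'lt⟩ := moveGain2 v M X hX L.formPerm hfix u₁ t hu₁t hu₁0 ht0'
        C D hCD' hdisj i hvi1 hYi hkeep
      exact hcontra Y' hY'v hY'lt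
    · by_cases hbh : v b (X b) = 1
      · -- extend the path
        have hbv0 : v b ∅ = 0 := by
          rcases hbin b ∅ with h | h
          · exact h
          · exfalso
            have hXb : X b = ∅ := hX.2.2.2 b h
            rw [hXb] at hb
            have := rich_empty hb
            omega
        exact ⟨b, hbL, ⟨hbh, hbv0⟩, hb⟩
      · -- append move: contradiction
        exfalso
        have hbv0 : v b ∅ = 0 := by
          rcases hbin b ∅ with h | h
          · exact h
          · exfalso
            have hXb : X b = ∅ := hX.2.2.2 b h
            rw [hXb] at hb
            have := rich_empty hb
            omega
        have hN' : (L ++ [b]).Nodup := by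
          refine List.Nodup.append hN (List.nodup_singleton _) ?_
          rw [List.disjoint_singleton]
          exact hbL
        have hC' : (L ++ [b]).Chain' (fun a c => Rich (v a) (X c)) := by
          refine List.isChain_append.2 ⟨hC, List.isChain_singleton _, ?_⟩
          intro x hx y hy
          rw [List.getLast?_eq_getLast hLne] at hx
          simp only [Option.mem_def, Option.some.injEq] at hx
          simp only [List.head?_cons, Option.mem_def, Option.some.injEq] at hy
          rw [← hx, ← hy] at *
          exact hb
        have hlast' : (L ++ [b]).getLast (by simp) = b := by
          rw [List.getLast_append]
          simp
        have hLne' : (L ++ [b]) ≠ [] := by simp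
        have hfix' : ∀ a, v a ∅ = 1 → (L ++ [b]).formPerm a = a := by
          intro a ha
          apply List.formPerm_apply_of_notMem
          intro hmem
          rcases List.mem_append.1 hmem with h | h
          · rw [hLv0 a h] at ha; omega
          · rw [List.mem_singleton.1 h] at ha
            rw [hbv0] at ha; omega
        have hedges' : ∀ a ∈ L ++ [b], a ≠ b →
            Rich (v a) (X ((L ++ [b]).formPerm a)) := by
          intro a ha hab
          have := path_edge (L ++ [b]) hN' hC' hLne' a ha (by rw [hlast']; exact hab)
          exact this
        have hYi : v i (X ((L ++ [b]).formPerm i)) = 1 := by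
          have hib : i ≠ b := fun h => hbL (h ▸ List.mem_cons_self)
          exact richZ hbin hmms hvi0 (hedges' i (List.mem_append_left _ (List.mem_cons_self)) hib)
        have hkeep : ∀ a, v a (X a) = 1 → v a (X ((L ++ [b]).formPerm a)) = 1 := by
          intro a ha
          by_cases haL : a ∈ L ++ [b]
          · rcases List.mem_append.1 haL with h | h
            · have hab : a ≠ b := fun hh => hbL (hh ▸ h)
              exact richZ hbin hmms (hLv0 a h) (hedges' a haL hab)
            · rw [List.mem_singleton.1 h] at ha
              exact absurd ha hbh
          · rw [List.formPerm_apply_of_notMem haL]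
            exact ha
        obtain ⟨Y', hY'v, hY'lt⟩ := moveGain v M X hX (L ++ [b]).formPerm hfix' i hvi1
          hYi hkeep
        exact hcontra Y' hY'v hY'lt
  · -- sink: contradiction
    exfalso
    push_neg at hsinkQ
    obtain ⟨Y', hY'v, hY'lt⟩ := moveSink v M X hbin hmms hX i j₁ t l₂ hinotl hmemb hvi1 hvi0 hXi
      hij₁ hchainhead htmem hσt hedges hsinkQ
    exact hcontra Y' hY'v hY'lt

theorem main_opt (v : Fin n → Finset α → ℕ) (M : Finset α)
    (hbin : ∀ i S, v i S = 0 ∨ v i S = 1)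
    (hmms : ∀ i, ∀ S X1 Y1 : Finset α, X1 ⊆ S → Y1 ⊆ S →
      min (v i Y1) (v i (S \ Y1)) ≤ max (v i X1) (v i (S \ X1)))
    (z : Fin n) (hz0 : v z ∅ = 0) :
    ∃ X : Fin n → Finset α,
      (∀ i, X i ⊆ M) ∧ (∀ i j, i ≠ j → Disjoint (X i) (X j)) ∧
      Finset.univ.biUnion X = M ∧
      ∀ i j, i ≠ j → muN (v i) (X i ∪ X j) ≤ v i (X i) := by
  classical
  set 𝒯 : Finset (Fin n → Finset α) :=
    (Fintype.piFinset fun _ : Fin n => M.powerset).filter (ValidP v M) with h𝒯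
  have hmem𝒯 : ∀ X, X ∈ 𝒯 ↔ ValidP v M X := by
    intro X
    rw [h𝒯, Finset.mem_filter, Fintype.mem_piFinset]
    constructor
    · exact fun h => h.2
    · intro h
      exact ⟨fun a => Finset.mem_powerset.2 (h.1 a), h⟩
  have hne : 𝒯.Nonempty := by
    obtain ⟨hs1, hs2, hs3⟩ := single_alloc M z
    refine ⟨fun a => if a = z then M else ∅, (hmem𝒯 _).2 ⟨hs1, hs2, hs3, ?_⟩⟩
    intro a ha
    by_cases h : a = z
    · subst h; rw [hz0] at ha; omega
    · simp [h]
  obtain ⟨X, hX𝒯, hminX⟩ := Finset.exists_min_image 𝒯 (Phi v M) hne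
  have hX : ValidP v M X := (hmem𝒯 X).1 hX𝒯
  have hcontra : ∀ Y, ValidP v M Y → ¬ Phi v M Y < Phi v M X := by
    intro Y hY hlt
    have := hminX Y ((hmem𝒯 Y).2 hY)
    omega
  refine ⟨X, hX.1, hX.2.1, hX.2.2.1, ?_⟩
  intro i j hij
  apply muN_le_goal (hbin i)
  by_contra hcon
  push_neg at hcon
  obtain ⟨hvi1, hRich⟩ := hcon
  have hvi0 : v i ∅ = 0 := by
    rcases hbin i ∅ with h | h
    · exact h
    · exact absurd (hX.2.2.2 i h ▸ h) hvi1
  have hS : v i (X i ∪ X j) = 1 := richZ hbin hmms hvi0 hRich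
  have hjh : v j (X j) = 1 := by
    by_contra hj
    obtain ⟨Y, hYv, hYlt⟩ := moveA1 v M X hX i j hij hvi1 hvi0 hS hj
    exact hcontra Y hYv hYlt
  have hvj1 : ¬ v j ∅ = 1 := by
    intro h
    have hXj : X j = ∅ := hX.2.2.2 j h
    rw [hXj, Finset.union_empty] at hRich
    exact hvi1 (richZ hbin hmms hvi0 hRich)
  have hvj0 : v j ∅ = 0 := by rcases hbin j ∅ with h | h; exacts [h, absurd h hvj1]
  have hXi : X i = ∅ := by
    by_contra hXine
    obtain ⟨Y, hYv, hYlt⟩ := moveA2 v M X hX i j hij hvi1 hvi0 hS hjh hvj1 hXine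
    exact hcontra Y hYv hYlt
  have hRichXj : Rich (v i) (X j) := by rwa [hXi, Finset.empty_union] at hRich
  -- build arbitrarily long paths
  have key : ∀ k : ℕ, ∃ l : List (Fin n), l ≠ [] ∧ (i :: l).Nodup ∧
      (i :: l).Chain' (fun a b => Rich (v a) (X b)) ∧
      (∀ a ∈ l, v a (X a) = 1 ∧ v a ∅ = 0) ∧ k ≤ l.length := by
    intro k
    induction k with
    | zero =>
      refine ⟨[j], by simp, by simp [hij], ?_, ?_, by simp⟩
      · exact List.isChain_pair.2 hRichXj
      · intro a ha
        rw [List.mem_singleton.1 ha]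
        exact ⟨hjh, hvj0⟩
    | succ k ih =>
      obtain ⟨l, hlne, hN, hC, hmemb, hlen⟩ := ih
      obtain ⟨b, hbL, hbprops, hbrich⟩ := grow v M X hbin hmms hX hcontra i hvi1 hvi0 hXi
        l hlne hN hC hmemb
      refine ⟨l ++ [b], by simp, ?_, ?_, ?_, ?_⟩
      · have : (i :: l) ++ [b] = i :: (l ++ [b]) := by simp
        rw [← this]
        refine List.Nodup.append hN (List.nodup_singleton _) ?_
        rw [List.disjoint_singleton]
        exact hbL
      · have : (i :: l) ++ [b] = i :: (l ++ [b]) := by simp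
        rw [← this]
        refine List.isChain_append.2 ⟨hC, List.isChain_singleton _, ?_⟩
        intro x hx y hy
        rw [List.getLast?_eq_getLast (List.cons_ne_nil _ _)] at hx
        simp only [Option.mem_def, Option.some.injEq] at hx
        simp only [List.head?_cons, Option.mem_def, Option.some.injEq] at hy
        rw [← hx, ← hy] at *
        exact hbrich
      · intro a ha
        rcases List.mem_append.1 ha with h | h
        · exact hmemb a h
        · rw [List.mem_singleton.1 h]
          exact hbprops
      · rw [List.length_append]
        simp
        omega
  obtain ⟨l, hlne, hN, hC, hmemb, hlen⟩ := key (n + 1)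
  have hl_nodup : l.Nodup := (List.nodup_cons.1 hN).2
  have := List.Nodup.length_le_card hl_nodup
  rw [Fintype.card_fin] at this
  omega

end opt
end PMMSaux

open PMMSaux

theorem stmt8 {α : Type*} [DecidableEq α] (n : ℕ) (hn : 1 ≤ n) (M : Finset α)
    (v : Fin n → Finset α → ℕ)
    (hbin : ∀ i S, v i S = 0 ∨ v i S = 1)
    (hmms : ∀ i, ∀ S X1 Y1 : Finset α, X1 ⊆ S → Y1 ⊆ S →
      min (v i Y1) (v i (S \ Y1)) ≤ max (v i X1) (v i (S \ X1))) :
    ∃ X : Fin n → Finset α,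
      (∀ i, X i ⊆ M) ∧ (∀ i j, i ≠ j → Disjoint (X i) (X j)) ∧
      Finset.univ.biUnion X = M ∧
      ∀ i j, i ≠ j → muN (v i) (X i ∪ X j) ≤ v i (X i) := by
  classical
  obtain rfl | hn2 : n = 1 ∨ 2 ≤ n := by omega
  · refine ⟨fun _ => M, fun _ => Finset.Subset.refl M,
      fun i j hij => absurd (Subsingleton.elim i j) hij, ?_,
      fun i j hij => absurd (Subsingleton.elim i j) hij⟩
    ext x
    simp only [Finset.mem_biUnion, Finset.mem_univ, true_and]
    exact ⟨fun ⟨_, h⟩ => h, fun h => ⟨⟨0, by omega⟩, h⟩⟩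
  by_cases hZ : ∀ z : Fin n, v z ∅ = 1
  · by_cases hR : ∀ u : Fin n, Rich (v u) M
    · have h0n : (0 : ℕ) < n := by omega
      set u0 : Fin n := ⟨0, h0n⟩ with hu0def
      obtain ⟨A, hA, h0A, h0B⟩ := hR u0
      by_cases hEx : ∃ u : Fin n, u ≠ u0 ∧ v u (M \ A) = 1
      · obtain ⟨u1, hu1, hv1⟩ := hEx
        exact twopart M hZ hbin u0 u1 (Ne.symm hu1) A hA h0A hv1
      · push_neg at hEx
        set u1 : Fin n := ⟨1, by omega⟩ with hu1def
        have h01 : u0 ≠ u1 := by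
          simp only [hu0def, hu1def, Ne, Fin.mk.injEq]
          omega
        have hv1A : v u1 A = 1 := by
          rcases richSplit hbin hmms (hR u1) hA with h | h
          · exact h
          · exact absurd h (hEx u1 (Ne.symm h01))
        exact twopart M hZ hbin u1 u0 (Ne.symm h01) A hA hv1A h0B
    · push_neg at hR
      obtain ⟨u, hu⟩ := hR
      obtain ⟨hs1, hs2, hs3⟩ := single_alloc M u
      refine ⟨fun a => if a = u then M else ∅, hs1, hs2, hs3, ?_⟩
      intro i j hij
      apply muN_le_goal (hbin i)
      by_cases h : i = u
      · subst h
        right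
        simpa [Ne.symm hij] using hu
      · left
        simpa [h] using hZ i
  · push_neg at hZ
    obtain ⟨z, hz⟩ := hZ
    have hz0 : v z ∅ = 0 := by rcases hbin z ∅ with h | h; exacts [h, absurd h hz]
    exact main_opt v M hbin hmms z hz0
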